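/- arXiv:2106.01275 — 10 statements merged into one kernel-verified Lean document; each statement's English description precedes it below -/
import Mathlib

section
/- Let d ≥ 1 and k ≥ 1. The chromatic number of the displacement graph G(d,k,k) (displacement p equal to the distance k) is exactly 2k + 1. -/
open Finset

/-- The L1 norm on the integer lattice `Fin d → ℤ`. -/
def norm1 {d : ℕ} (x : Fin d → ℤ) : ℤ := ∑ i, |x i|

/-- The first standard basis vector of `Fin d → ℤ`. -/
def e1 {d : ℕ} : Fin d → ℤ := fun i => if (i : ℕ) = 0 then 1 else 0

/-- `inN p k x y` means `y` belongs to the displaced distance-`k` neighborhood `N(x, p, k)`,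
i.e. `‖y − (x + p·e₁)‖₁ ≤ k` or `‖y − (x − p·e₁)‖₁ ≤ k`. -/
def inN {d : ℕ} (p k : ℕ) (x y : Fin d → ℤ) : Prop :=
  norm1 (y - (x + (p : ℤ) • e1)) ≤ (k : ℤ) ∨ norm1 (y - (x - (p : ℤ) • e1)) ≤ (k : ℤ)


lemma norm1_neg {d : ℕ} (x : Fin d → ℤ) : norm1 (-x) = norm1 x :=
  Finset.sum_congr rfl fun i _ => by simp

lemma inN_symm {d : ℕ} {p k : ℕ} {x y : Fin d → ℤ} (h : inN p k x y) : inN p k y x := by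
  rcases h with h | h
  · right
    have hv : x - (y - (p : ℤ) • e1) = -(y - (x + (p : ℤ) • e1)) := by abel
    rw [hv, norm1_neg]; exact h
  · left
    have hv : x - (y + (p : ℤ) • e1) = -(y - (x - (p : ℤ) • e1)) := by abel
    rw [hv, norm1_neg]; exact h

/-- The displacement graph `G(d, p, k)` on the lattice `Fin d → ℤ`:
distinct `x, y` are adjacent iff `y ∈ N(x, p, k)`. -/
def dispGraph (d p k : ℕ) : SimpleGraph (Fin d → ℤ) where
  Adj x y := x ≠ y ∧ inN p k x y
  symm := ⟨fun _ _ h => ⟨h.1.symm, inN_symm h.2⟩⟩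
  loopless := ⟨fun _ h => h.1 rfl⟩

lemma norm1_single_le {d : ℕ} (x : Fin d → ℤ) (i : Fin d) : |x i| ≤ norm1 x := by
  unfold norm1
  exact Finset.single_le_sum (fun j _ => abs_nonneg (x j)) (Finset.mem_univ i)

lemma e1_apply_ne {d : ℕ} {i : Fin d} (h : (i : ℕ) ≠ 0) : (e1 : Fin d → ℤ) i = 0 := by
  simp [e1, h]

/-- One-sided analysis: if `‖y - (x + k e₁)‖ ≤ k` and `x ≠ y` then the first coordinate of
`y - x` lies in `[1, 2k]`. -/
lemma case_left {d k : ℕ} (hd : 0 < d) {x y : Fin d → ℤ} (hne : x ≠ y)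
    (h : norm1 (y - (x + (k : ℤ) • e1)) ≤ (k : ℤ)) :
    0 < y ⟨0, hd⟩ - x ⟨0, hd⟩ ∧ y ⟨0, hd⟩ - x ⟨0, hd⟩ ≤ 2 * k := by
  set i0 : Fin d := ⟨0, hd⟩ with hi0
  set w : Fin d → ℤ := y - (x + (k : ℤ) • e1) with hw
  have hwi0 : w i0 = y i0 - x i0 - k := by
    simp [hw, e1, i0]
    ring
  have hwabs : -(k : ℤ) ≤ w i0 ∧ w i0 ≤ (k : ℤ) :=
    abs_le.mp ((norm1_single_le w i0).trans h)
  obtain ⟨hwa, hwb⟩ := hwabs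
  have h1 : y i0 - x i0 ≤ 2 * k := by omega
  have h2 : 0 ≤ y i0 - x i0 := by omega
  refine ⟨?_, h1⟩
  rcases lt_or_eq_of_le h2 with h3 | h3
  · exact h3
  · -- y i0 = x i0 ; then |w i0| = k and all other coordinates vanish, so x = y
    exfalso
    have hwk : w i0 = -(k : ℤ) := by omega
    have habs0 : |w i0| = (k : ℤ) := by rw [hwk]; simp
    have hn : norm1 w = ∑ i, |w i| := rfl
    have hsplit : |w i0| + ∑ i ∈ Finset.univ.erase i0, |w i| = ∑ i, |w i| :=
      Finset.add_sum_erase Finset.univ (fun i => |w i|) (Finset.mem_univ i0)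
    have hrest : ∑ i ∈ Finset.univ.erase i0, |w i| ≤ 0 := by omega
    have hnonneg : (0:ℤ) ≤ ∑ i ∈ Finset.univ.erase i0, |w i| :=
      Finset.sum_nonneg (fun j _ => abs_nonneg (w j))
    have hall : ∑ i ∈ Finset.univ.erase i0, |w i| = 0 := le_antisymm hrest hnonneg
    have hzero : ∀ i ∈ Finset.univ.erase i0, |w i| = 0 :=
      (Finset.sum_eq_zero_iff_of_nonneg (fun j _ => abs_nonneg (w j))).mp hall
    apply hne
    funext i
    by_cases hii : i = i0
    · subst hii; omega
    · have hval : (i : ℕ) ≠ 0 := fun hv => hii (Fin.ext hv)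
      have hwi : w i = y i - x i := by
        simp [hw, e1_apply_ne hval]
      have h0 : |w i| = 0 := hzero i (Finset.mem_erase.mpr ⟨hii, Finset.mem_univ i⟩)
      have := abs_eq_zero.mp h0
      rw [hwi] at this
      omega

/-- Adjacency in `dispGraph d k k` forces the first coordinate of the difference to be
nonzero, with absolute value at most `2k`. -/
lemma adj_diff {d k : ℕ} (hd : 0 < d) {x y : Fin d → ℤ}
    (h : (dispGraph d k k).Adj x y) :
    y ⟨0, hd⟩ - x ⟨0, hd⟩ ≠ 0 ∧ -(2 * k : ℤ) ≤ y ⟨0, hd⟩ - x ⟨0, hd⟩ ∧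
      y ⟨0, hd⟩ - x ⟨0, hd⟩ ≤ 2 * k := by
  obtain ⟨hne, hN⟩ := h
  rcases hN with hl | hr
  · obtain ⟨h1, h2⟩ := case_left hd hne hl
    refine ⟨by omega, by omega, by omega⟩
  · have hl' : norm1 (x - (y + (k : ℤ) • e1)) ≤ (k : ℤ) := by
      have hv : x - (y + (k : ℤ) • e1) = -(y - (x - (k : ℤ) • e1)) := by abel
      rw [hv, norm1_neg]; exact hr
    obtain ⟨h1, h2⟩ := case_left hd hne.symm hl'
    refine ⟨by omega, by omega, by omega⟩

lemma norm1_smul_e1 {d : ℕ} (hd : 0 < d) (c : ℤ) : norm1 (c • (e1 : Fin d → ℤ)) = |c| := by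
  unfold norm1
  have key : ∀ i : Fin d, |(c • (e1 : Fin d → ℤ)) i| = if i = (⟨0, hd⟩ : Fin d) then |c| else 0 := by
    intro i
    by_cases hi : i = (⟨0, hd⟩ : Fin d)
    · subst hi; simp [e1]
    · have hval : (i : ℕ) ≠ 0 := fun hv => hi (Fin.ext hv)
      simp [e1, hval, hi]
  rw [Finset.sum_congr rfl (fun i _ => key i), Finset.sum_ite_eq' _ _ (fun _ => |c|)]
  simp

/-- For `d ≥ 1` and `k ≥ 1`, the chromatic number of the displacement graph `G(d, k, k)`
is exactly `2k + 1`. -/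
theorem stmt1 (d : ℕ) (hd : 0 < d) (k : ℕ) (hk : 1 ≤ k) :
    (dispGraph d k k).chromaticNumber = ((2 * k + 1 : ℕ) : ℕ∞) := by
  haveI : NeZero (2 * k + 1) := ⟨by omega⟩
  apply le_antisymm
  · -- upper bound: coloring by the first coordinate mod 2k+1
    have C : (dispGraph d k k).Coloring (ZMod (2 * k + 1)) := by
      refine SimpleGraph.Coloring.mk (fun x => ((x ⟨0, hd⟩ : ℤ) : ZMod (2 * k + 1))) ?_
      intro x y hadj hcol
      obtain ⟨hne0, hlo, hhi⟩ := adj_diff hd hadj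
      have hdvd : ((2 * k + 1 : ℕ) : ℤ) ∣ (y ⟨0, hd⟩ - x ⟨0, hd⟩) := by
        rw [← ZMod.intCast_zmod_eq_zero_iff_dvd]
        push_cast
        rw [sub_eq_zero]
        exact hcol.symm
      have hdvd' : ((2 * k + 1 : ℕ) : ℤ) ∣ |y ⟨0, hd⟩ - x ⟨0, hd⟩| :=
        (dvd_abs _ _).mpr hdvd
      have hle := Int.le_of_dvd (abs_pos.mpr hne0) hdvd'
      have hub : |y ⟨0, hd⟩ - x ⟨0, hd⟩| ≤ 2 * k := abs_le.mpr ⟨hlo, hhi⟩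
      have : ((2 * k + 1 : ℕ) : ℤ) ≤ 2 * k := hle.trans hub
      push_cast at this
      omega
    have hcol := C.colorable
    have hcard : Fintype.card (ZMod (2 * k + 1)) = 2 * k + 1 := ZMod.card _
    rw [hcard] at hcol
    exact hcol.chromaticNumber_le
  · -- lower bound: the clique {0, e₁, 2e₁, …, 2k·e₁}
    set f : ℕ → (Fin d → ℤ) := fun j => (j : ℤ) • e1 with hf
    have hfinj : Function.Injective f := by
      intro a b hab
      have := congrFun hab ⟨0, hd⟩
      simp [hf, e1] at this
      exact this
    set s : Finset (Fin d → ℤ) := (Finset.range (2 * k + 1)).image f with hs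
    have hcard : s.card = 2 * k + 1 := by
      rw [hs, Finset.card_image_of_injective _ hfinj, Finset.card_range]
    have hclique : (dispGraph d k k).IsClique s := by
      intro a ha b hb hab
      rw [hs, Finset.coe_image] at ha hb
      obtain ⟨i, hi, rfl⟩ := ha
      obtain ⟨j, hj, rfl⟩ := hb
      rw [Finset.mem_coe, Finset.mem_range] at hi hj
      refine ⟨hab, ?_⟩
      have hij : i ≠ j := fun h => hab (by rw [h])
      rcases lt_or_gt_of_ne (a := (i : ℤ)) (b := (j : ℤ)) (by exact_mod_cast hij) with hlt | hgt
      · left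
        have hveq : f j - (f i + (k : ℤ) • e1) = ((j : ℤ) - i - k) • e1 := by
          simp only [hf]
          rw [sub_smul, sub_smul]
          abel
        rw [hveq, norm1_smul_e1 hd, abs_le]
        constructor <;> omega
      · right
        have hveq : f j - (f i - (k : ℤ) • e1) = ((j : ℤ) - i + k) • e1 := by
          simp only [hf]
          rw [add_smul, sub_smul]
          abel
        rw [hveq, norm1_smul_e1 hd, abs_le]
        constructor <;> omega
    have hle := hclique.card_le_chromaticNumber
    rw [hcard] at hle
    exact hle
end

section
/- Let d ≥ 1 and k ≥ 1, and take displacement p = k. The map x ↦ x₁ mod (2k+1) is a proper coloring of the displacement graph G(d,k,k) with 2k+1 colors: whenever x and y are adjacent in G(d,k,k), x₁ ≢ y₁ (mod 2k+1). -/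
open Finset

/-- For `d ≥ 1`, `k ≥ 1` and displacement `p = k`, the map `x ↦ x₁ mod (2k+1)` is a proper
coloring of `G(d, k, k)` with `2k+1` colors: adjacent vertices get different colors. -/
theorem stmt3 (d : ℕ) (hd : 0 < d) (k : ℕ) (hk : 1 ≤ k)
    (x y : Fin d → ℤ) (hadj : (dispGraph d k k).Adj x y) :
    x ⟨0, hd⟩ % (2 * (k : ℤ) + 1) ≠ y ⟨0, hd⟩ % (2 * (k : ℤ) + 1) := by
  obtain ⟨hne, h⟩ := hadj
  set i0 : Fin d := ⟨0, hd⟩ with hi0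
  intro heq
  have hdvd : (2 * (k : ℤ) + 1) ∣ (y i0 - x i0) := Int.ModEq.dvd heq
  -- the key : the first coordinate difference is 0
  have hfirst : ∀ (z : Fin d → ℤ), norm1 z ≤ (k : ℤ) → z i0 = y i0 - x i0 - (k : ℤ) ∨
      z i0 = y i0 - x i0 + (k : ℤ) → True := fun _ _ _ => trivial
  have habs0 : ∀ (z : Fin d → ℤ), |z i0| ≤ norm1 z := fun z =>
    Finset.single_le_sum (f := fun i => |z i|) (fun i _ => abs_nonneg _) (Finset.mem_univ i0)
  have key : ∀ (z : Fin d → ℤ), norm1 z ≤ |z i0| → ∀ i, i ≠ i0 → z i = 0 := by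
    intro z hz i hi
    have hsum : norm1 z = |z i0| + ∑ j ∈ Finset.univ.erase i0, |z j| := by
      rw [norm1, ← Finset.add_sum_erase _ _ (Finset.mem_univ i0)]
    have hle : ∑ j ∈ Finset.univ.erase i0, |z j| ≤ 0 := by linarith [hz, hsum.symm.le]
    have hzero : ∀ j ∈ Finset.univ.erase i0, |z j| = 0 := by
      have := (Finset.sum_eq_zero_iff_of_nonneg (fun j _ => abs_nonneg (z j))).mp
        (le_antisymm hle (Finset.sum_nonneg fun j _ => abs_nonneg (z j)))
      exact this
    have := hzero i (Finset.mem_erase.mpr ⟨hi, Finset.mem_univ i⟩)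
    exact abs_eq_zero.mp this
  have hD : y i0 - x i0 = 0 := by
    rcases h with h | h
    · set z := y - (x + (k : ℤ) • e1) with hz
      have hzi0 : z i0 = y i0 - x i0 - (k : ℤ) := by
        simp [hz, e1, hi0]; ring
      have h1 : |z i0| ≤ (k : ℤ) := le_trans (habs0 z) h
      have h2 : 0 ≤ y i0 - x i0 ∧ y i0 - x i0 ≤ 2 * k := by
        rw [hzi0] at h1
        constructor <;> [linarith [abs_le.mp h1]; linarith [abs_le.mp h1]]
      have hD0 : y i0 - x i0 = 0 := by
        by_contra hne0
        have : 0 < y i0 - x i0 := lt_of_le_of_ne h2.1 (Ne.symm hne0)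
        have habsD : |y i0 - x i0| < 2 * (k : ℤ) + 1 := by
          rw [abs_of_nonneg h2.1]; linarith
        exact hne0 (Int.eq_zero_of_abs_lt_dvd hdvd habsD)
      exact hD0
    · set z := y - (x - (k : ℤ) • e1) with hz
      have hzi0 : z i0 = y i0 - x i0 + (k : ℤ) := by
        simp [hz, e1, hi0]; ring
      have h1 : |z i0| ≤ (k : ℤ) := le_trans (habs0 z) h
      have h2 : -(2 * (k : ℤ)) ≤ y i0 - x i0 ∧ y i0 - x i0 ≤ 0 := by
        rw [hzi0] at h1
        constructor <;> [linarith [abs_le.mp h1]; linarith [abs_le.mp h1]]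
      by_contra hne0
      have habsD : |y i0 - x i0| < 2 * (k : ℤ) + 1 := by
        rw [abs_of_nonpos h2.2]; linarith
      exact hne0 (Int.eq_zero_of_abs_lt_dvd hdvd habsD)
  -- now all coordinates agree
  apply hne
  funext i
  by_cases hi : i = i0
  · subst hi; linarith [hD]
  · rcases h with h | h
    · set z := y - (x + (k : ℤ) • e1) with hz
      have hzi0 : |z i0| = (k : ℤ) := by
        have : z i0 = y i0 - x i0 - (k : ℤ) := by simp [hz, e1, hi0]; ring
        rw [this, hD]; simp
      have := key z (by rw [hzi0]; exact h) i hi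
      have he1i : e1 (d := d) i = 0 := by
        simp [e1]; intro hc; exact hi (Fin.ext hc)
      simp [hz, he1i] at this
      linarith [this]
    · set z := y - (x - (k : ℤ) • e1) with hz
      have hzi0 : |z i0| = (k : ℤ) := by
        have : z i0 = y i0 - x i0 + (k : ℤ) := by simp [hz, e1, hi0]; ring
        rw [this, hD]; simp
      have := key z (by rw [hzi0]; exact h) i hi
      have he1i : e1 (d := d) i = 0 := by
        simp [e1]; intro hc; exact hi (Fin.ext hc)
      simp [hz, he1i] at this
      linarith [this]
end

section
/- Let d ≥ 1 and let p > k ≥ 1. The map x ↦ ⌊(x₁ mod 2p)/(p−k)⌋, where x₁ mod 2p is taken in {0,…,2p−1}, is a proper coloring of the displacement graph G(d,p,k) using ⌈2p/(p−k)⌉ colors: whenever x and y are adjacent in G(d,p,k), ⌊(x₁ mod 2p)/(p−k)⌋ ≠ ⌊(y₁ mod 2p)/(p−k)⌋. -/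
open Finset

/-- For `d ≥ 1` and `p > k ≥ 1`, the map `x ↦ ⌊(x₁ mod 2p) / (p − k)⌋` (with
`x₁ mod 2p ∈ {0, …, 2p−1}`) is a proper coloring of `G(d, p, k)`:
adjacent vertices get different colors. -/
theorem stmt7 (d : ℕ) (hd : 0 < d) (p k : ℕ) (hk : 1 ≤ k) (hpk : k < p)
    (x y : Fin d → ℤ) (hadj : (dispGraph d p k).Adj x y) :
    (x ⟨0, hd⟩ % (2 * (p : ℤ))) / ((p : ℤ) - (k : ℤ)) ≠
      (y ⟨0, hd⟩ % (2 * (p : ℤ))) / ((p : ℤ) - (k : ℤ)) := by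
  -- notation
  intro h
  set i0 : Fin d := ⟨0, hd⟩ with hi0
  set P : ℤ := (p : ℤ) with hPdef
  set K : ℤ := (k : ℤ) with hKdef
  have hP : 0 < P := by rw [hPdef]; exact_mod_cast Nat.lt_of_lt_of_le (Nat.lt_of_lt_of_le Nat.zero_lt_one hk) hpk.le
  have hPK : 0 < P - K := by
    have : K < P := by rw [hPdef, hKdef]; exact_mod_cast hpk
    omega
  have hK0 : 0 < K := by rw [hKdef]; exact_mod_cast hk
  -- extract coordinate bound
  have key : ∀ v : Fin d → ℤ, |v i0| ≤ norm1 v := fun v =>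
    Finset.single_le_sum (f := fun i => |v i|) (fun i _ => abs_nonneg _) (Finset.mem_univ _)
  have he1 : e1 i0 = 1 := by simp [e1, hi0]
  set δ : ℤ := y i0 - x i0 with hδ
  have hcase : (P - K ≤ δ ∧ δ ≤ P + K) ∨ (-(P + K) ≤ δ ∧ δ ≤ -(P - K)) := by
    rcases hadj.2 with hc | hc
    · left
      have h1 := le_trans (key _) hc
      simp only [Pi.sub_apply, Pi.add_apply, Pi.smul_apply, he1, smul_eq_mul, mul_one] at h1
      rcases abs_le.mp h1 with ⟨hl, hr⟩
      constructor <;> omega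
    · right
      have h1 := le_trans (key _) hc
      simp only [Pi.sub_apply, Pi.add_apply, Pi.smul_apply, he1, smul_eq_mul, mul_one] at h1
      rcases abs_le.mp h1 with ⟨hl, hr⟩
      constructor <;> omega
  set a : ℤ := x i0 % (2 * P) with ha
  set b : ℤ := y i0 % (2 * P) with hb
  -- remainders mod (P - K)
  have hra0 : 0 ≤ a % (P - K) := Int.emod_nonneg _ (ne_of_gt hPK)
  have hra1 : a % (P - K) < P - K := Int.emod_lt_of_pos _ hPK
  have hrb0 : 0 ≤ b % (P - K) := Int.emod_nonneg _ (ne_of_gt hPK)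
  have hrb1 : b % (P - K) < P - K := Int.emod_lt_of_pos _ hPK
  have hba : b - a = b % (P - K) - a % (P - K) := by
    conv_lhs => rw [← Int.mul_ediv_add_emod b (P - K), ← Int.mul_ediv_add_emod a (P - K)]
    rw [← h]; ring
  -- relation mod 2P
  set m : ℤ := y i0 / (2 * P) - x i0 / (2 * P) with hmdef
  have hm : δ - (b - a) = 2 * P * m := by
    have hxe : x i0 = 2 * P * (x i0 / (2 * P)) + a := (Int.mul_ediv_add_emod _ _).symm
    have hye : y i0 = 2 * P * (y i0 / (2 * P)) + b := (Int.mul_ediv_add_emod _ _).symm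
    rw [hδ, hmdef]
    nlinarith [hxe, hye]
  have hm0 : m = 0 := by
    rcases lt_trichotomy m 0 with hlt | heq | hgt
    · exfalso
      have : m ≤ -1 := by omega
      have h1 : 2 * P * m ≤ 2 * P * (-1) := by nlinarith
      rcases hcase with ⟨h2, h3⟩ | ⟨h2, h3⟩ <;> omega
    · exact heq
    · exfalso
      have : 1 ≤ m := by omega
      have h1 : 2 * P * 1 ≤ 2 * P * m := by nlinarith
      rcases hcase with ⟨h2, h3⟩ | ⟨h2, h3⟩ <;> omega
  rw [hm0, mul_zero] at hm
  rcases hcase with ⟨h2, h3⟩ | ⟨h2, h3⟩ <;> omega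
end

section
/- Let d ≥ 1 and let p, k be natural numbers with p < k and k + p even, and set α = (k+p)/2 and β = (k−p)/2. Then for all x, y ∈ C(d,α,β) one has x ∈ N(y,p,k); that is, ‖x − (y + p·e₁)‖₁ ≤ k or ‖x − (y − p·e₁)‖₁ ≤ k. In particular C(d,α,β) is a clique of the displacement graph G(d,p,k). -/
open Finset

/-- `∑_{i=2}^d |x_i|` : the sum of absolute values of all but the first coordinate. -/
def tailSum {d : ℕ} (x : Fin d → ℤ) : ℤ :=
  ∑ i ∈ Finset.univ.filter (fun i : Fin d => (i : ℕ) ≠ 0), |x i|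


/-- The set `C(d, α, β) = { x : ‖x‖₁ ≤ α and ∑_{i=2}^d |x_i| ≤ β }`. -/
def Cset (d : ℕ) (α β : ℤ) : Set (Fin d → ℤ) := {x | norm1 x ≤ α ∧ tailSum x ≤ β}

lemma norm1_split {d : ℕ} (hd : 0 < d) (z : Fin d → ℤ) :
    norm1 z = |z ⟨0, hd⟩| + tailSum z := by
  have h : (Finset.univ.filter (fun i : Fin d => ¬ (i : ℕ) ≠ 0)) = {⟨0, hd⟩} := by
    ext i
    simp [Fin.ext_iff]
  rw [norm1, tailSum,
    ← Finset.sum_filter_add_sum_filter_not Finset.univ (fun i : Fin d => (i : ℕ) ≠ 0), h,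
    Finset.sum_singleton, add_comm]

/-- If `p < k`, `k + p` is even, `α = (k+p)/2` and `β = (k−p)/2`, then any two points of
`C(d, α, β)` are displaced distance-`k` neighbors: for all `x, y ∈ C(d, α, β)`,
`x ∈ N(y, p, k)`; so `C(d, α, β)` is a clique of the displacement graph `G(d, p, k)`. -/
theorem stmt8 (d : ℕ) (hd : 0 < d) (p k : ℕ) (hpk : p < k) (heven : Even (k + p))
    (α β : ℤ) (hα : 2 * α = (k : ℤ) + (p : ℤ)) (hβ : 2 * β = (k : ℤ) - (p : ℤ))
    (x y : Fin d → ℤ) (hx : x ∈ Cset d α β) (hy : y ∈ Cset d α β) :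
    inN p k y x := by
  obtain ⟨hx1, hx2⟩ := hx
  obtain ⟨hy1, hy2⟩ := hy
  have hxs := norm1_split hd x
  have hys := norm1_split hd y
  have hT : tailSum (x - y) ≤ tailSum x + tailSum y := by
    rw [tailSum, tailSum, tailSum, ← Finset.sum_add_distrib]
    refine Finset.sum_le_sum fun i _ => ?_
    simpa [sub_eq_add_neg] using abs_add_le (x i) (-(y i))
  have key : ∀ c : ℤ, norm1 (x - (y + c • e1)) =
      |x ⟨0, hd⟩ - y ⟨0, hd⟩ - c| + tailSum (x - y) := by
    intro c
    rw [norm1_split hd]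
    congr 1
    · simp only [Pi.sub_apply, Pi.add_apply, Pi.smul_apply, e1, smul_eq_mul]
      norm_num
      ring_nf
    · rw [tailSum, tailSum]
      refine Finset.sum_congr rfl fun i hi => ?_
      simp only [Finset.mem_filter] at hi
      simp [e1, hi.2]
  have h1 : |x ⟨0, hd⟩| ≤ α - tailSum x := by linarith [hx1, hxs]
  have h2 : |y ⟨0, hd⟩| ≤ α - tailSum y := by linarith [hy1, hys]
  have h1a := le_abs_self (x ⟨0, hd⟩)
  have h1b := neg_abs_le (x ⟨0, hd⟩)
  have h2a := le_abs_self (y ⟨0, hd⟩)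
  have h2b := neg_abs_le (y ⟨0, hd⟩)
  have hkp : (p : ℤ) < k := by exact_mod_cast hpk
  rcases le_or_gt (y ⟨0, hd⟩) (x ⟨0, hd⟩) with h | h
  · left
    rw [key (p : ℤ)]
    have : |x ⟨0, hd⟩ - y ⟨0, hd⟩ - (p : ℤ)| ≤ (k : ℤ) - tailSum (x - y) := by
      rw [abs_le]
      constructor <;> linarith
    linarith
  · right
    have heq : x - (y - (p : ℤ) • e1) = x - (y + (-(p : ℤ)) • e1) := by
      simp [sub_eq_add_neg, neg_smul]
    rw [heq, key (-(p : ℤ))]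
    have : |x ⟨0, hd⟩ - y ⟨0, hd⟩ - (-(p : ℤ))| ≤ (k : ℤ) - tailSum (x - y) := by
      rw [abs_le]
      constructor <;> linarith
    linarith
end

section
/- Let d ≥ 2 and let p, k be natural numbers with 1 ≤ p < k and k + p odd, and set α = (k+p−1)/2 and β = (k−p−1)/2. Let C' = C(d,α,β) ∪ T ∪ S. Then for all x, y ∈ C' one has x ∈ N(y,p,k); that is, ‖x − (y + p·e₁)‖₁ ≤ k or ‖x − (y − p·e₁)‖₁ ≤ k. In particular C' is a clique of the displacement graph G(d,p,k). -/
open Finset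

/-- The `j`-th coordinate (0-indexed) of a lattice point, or `0` if out of range. -/
def coord {d : ℕ} (x : Fin d → ℤ) (j : ℕ) : ℤ := if h : j < d then x ⟨j, h⟩ else 0


/-- The set `T = { x : −(p−1) ≤ x₁ ≤ p, 1 ≤ x₂ ≤ β, and ∑_{i=2}^d |x_i| = β+1 }`. -/
def Tset (d : ℕ) (p β : ℤ) : Set (Fin d → ℤ) :=
  {x | -(p - 1) ≤ coord x 0 ∧ coord x 0 ≤ p ∧ 1 ≤ coord x 1 ∧ coord x 1 ≤ β ∧
       tailSum x = β + 1}


/-- The set `S = { x : p+1 ≤ x₁ ≤ α+1, |x₂| ≤ β, and ‖x‖₁ = α+1 }`. -/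
def Sset (d : ℕ) (p α β : ℤ) : Set (Fin d → ℤ) :=
  {x | p + 1 ≤ coord x 0 ∧ coord x 0 ≤ α + 1 ∧ |coord x 1| ≤ β ∧ norm1 x = α + 1}

/-- Sum of `|z i|` over coordinates other than the first two. -/
def tail2 {d : ℕ} (z : Fin d → ℤ) : ℤ :=
  ∑ i ∈ Finset.univ.filter (fun i : Fin d => (i : ℕ) ≠ 0 ∧ (i : ℕ) ≠ 1), |z i|

lemma tailSum_nonneg {d : ℕ} (z : Fin d → ℤ) : 0 ≤ tailSum z :=
  Finset.sum_nonneg fun i _ => abs_nonneg _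

lemma tail2_nonneg {d : ℕ} (z : Fin d → ℤ) : 0 ≤ tail2 z :=
  Finset.sum_nonneg fun i _ => abs_nonneg _

lemma coord_sub {d : ℕ} (x y : Fin d → ℤ) (j : ℕ) :
    coord (x - y) j = coord x j - coord y j := by
  unfold coord; split <;> simp

lemma norm1_eq {d : ℕ} (hd : 0 < d) (z : Fin d → ℤ) :
    norm1 z = |coord z 0| + tailSum z := by
  rw [norm1, tailSum,
    ← Finset.sum_filter_add_sum_filter_not Finset.univ (fun i : Fin d => (i : ℕ) = 0)]
  have h : Finset.univ.filter (fun i : Fin d => (i : ℕ) = 0) = {(⟨0, hd⟩ : Fin d)} := by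
    ext i; simp [Fin.ext_iff]
  rw [h, Finset.sum_singleton, coord, dif_pos hd]

lemma tailSum_eq {d : ℕ} (hd : 1 < d) (z : Fin d → ℤ) :
    tailSum z = |coord z 1| + tail2 z := by
  rw [tailSum, tail2,
    ← Finset.sum_filter_add_sum_filter_not (Finset.univ.filter fun i : Fin d => (i : ℕ) ≠ 0)
      (fun i : Fin d => (i : ℕ) = 1), Finset.filter_filter, Finset.filter_filter]
  congr 1
  have h : Finset.univ.filter (fun i : Fin d => (i : ℕ) ≠ 0 ∧ (i : ℕ) = 1)
      = {(⟨1, hd⟩ : Fin d)} := by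
    ext i; simp [Fin.ext_iff]; omega
  rw [h, Finset.sum_singleton, coord, dif_pos hd]

lemma tail2_sub_le {d : ℕ} (x y : Fin d → ℤ) :
    tail2 (x - y) ≤ tail2 x + tail2 y := by
  rw [tail2, tail2, tail2, ← Finset.sum_add_distrib]
  exact Finset.sum_le_sum fun i _ => by simpa using abs_sub (x i) (y i)

lemma tailSum_shift {d : ℕ} (x y : Fin d → ℤ) (c : ℤ) :
    tailSum (x - (y + c • e1)) = tailSum (x - y) := by
  rw [tailSum, tailSum]
  refine Finset.sum_congr rfl fun i hi => ?_
  rw [Finset.mem_filter] at hi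
  simp [e1, hi.2]

lemma coord_shift {d : ℕ} (hd : 0 < d) (x y : Fin d → ℤ) (c : ℤ) :
    coord (x - (y + c • e1)) 0 = coord x 0 - coord y 0 - c := by
  simp [coord, dif_pos hd, e1]
  ring

lemma norm1_shift {d : ℕ} (hd : 0 < d) (x y : Fin d → ℤ) (c : ℤ) :
    norm1 (x - (y + c • e1)) = |coord x 0 - coord y 0 - c| + tailSum (x - y) := by
  rw [norm1_eq hd, coord_shift hd, tailSum_shift]

lemma keyLem (p k c T : ℤ) (hT : 0 ≤ T) (hA : |c| + T ≤ k + p) (hB : T - |c| ≤ k - p) :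
    |c - p| + T ≤ k ∨ |c + p| + T ≤ k := by
  rcases abs_cases c with ⟨h1, h2⟩ | ⟨h1, h2⟩
  · left; rcases abs_cases (c - p) with ⟨g1, g2⟩ | ⟨g1, g2⟩ <;> omega
  · right; rcases abs_cases (c + p) with ⟨g1, g2⟩ | ⟨g1, g2⟩ <;> omega

lemma mem_profile {d : ℕ} (hd : 1 < d) (p α β : ℤ) (z : Fin d → ℤ)
    (hz : z ∈ Cset d α β ∪ Tset d p β ∪ Sset d p α β) :
    (|coord z 0| + |coord z 1| + tail2 z ≤ α ∧ |coord z 1| + tail2 z ≤ β) ∨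
    (-(p - 1) ≤ coord z 0 ∧ coord z 0 ≤ p ∧ 1 ≤ coord z 1 ∧ coord z 1 ≤ β ∧
      |coord z 1| + tail2 z = β + 1) ∨
    (p + 1 ≤ coord z 0 ∧ coord z 0 ≤ α + 1 ∧ |coord z 1| ≤ β ∧
      |coord z 0| + |coord z 1| + tail2 z = α + 1) := by
  have h0 : (0 : ℕ) < d := by omega
  rcases hz with (hz | hz) | hz
  · left
    obtain ⟨h1, h2⟩ := hz
    rw [norm1_eq h0, tailSum_eq hd] at h1
    rw [tailSum_eq hd] at h2
    exact ⟨by linarith, h2⟩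
  · right; left
    obtain ⟨h1, h2, h3, h4, h5⟩ := hz
    rw [tailSum_eq hd] at h5
    exact ⟨h1, h2, h3, h4, h5⟩
  · right; right
    obtain ⟨h1, h2, h3, h4⟩ := hz
    rw [norm1_eq h0, tailSum_eq hd] at h4
    exact ⟨h1, h2, h3, by linarith⟩

lemma pairAB (p α β : ℤ) (hp : 1 ≤ p) (hβ : 0 ≤ β) (hab : α = β + p)
    (a u sx b v sy : ℤ) (hsx : 0 ≤ sx) (hsy : 0 ≤ sy)
    (hx : (|a| + |u| + sx ≤ α ∧ |u| + sx ≤ β) ∨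
          (-(p - 1) ≤ a ∧ a ≤ p ∧ 1 ≤ u ∧ u ≤ β ∧ |u| + sx = β + 1) ∨
          (p + 1 ≤ a ∧ a ≤ α + 1 ∧ |u| ≤ β ∧ |a| + |u| + sx = α + 1))
    (hy : (|b| + |v| + sy ≤ α ∧ |v| + sy ≤ β) ∨
          (-(p - 1) ≤ b ∧ b ≤ p ∧ 1 ≤ v ∧ v ≤ β ∧ |v| + sy = β + 1) ∨
          (p + 1 ≤ b ∧ b ≤ α + 1 ∧ |v| ≤ β ∧ |b| + |v| + sy = α + 1)) :
    |a - b| + (|u - v| + sx + sy) ≤ 2 * α + 1 ∧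
    (|u - v| + sx + sy) - |a - b| ≤ 2 * β + 1 := by
  have n1 := abs_nonneg (a - b)
  have n2 := abs_nonneg (u - v)
  have h1 : |a - b| ≤ |a| + |b| := abs_sub a b
  have h2 : |u - v| ≤ |u| + |v| := abs_sub u v
  have la := le_abs_self a; have la' := neg_abs_le a
  have lb := le_abs_self b; have lb' := neg_abs_le b
  have lu := le_abs_self u; have lu' := neg_abs_le u
  have lv := le_abs_self v; have lv' := neg_abs_le v
  rcases hx with hx | hx | hx <;> rcases hy with hy | hy | hy
  · omega
  · have hb : |b| ≤ p := abs_le.mpr ⟨by omega, by omega⟩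
    omega
  · have hb : |b| = b := abs_of_pos (by omega)
    omega
  · have ha : |a| ≤ p := abs_le.mpr ⟨by omega, by omega⟩
    omega
  · have ha : |a| ≤ p := abs_le.mpr ⟨by omega, by omega⟩
    have hb : |b| ≤ p := abs_le.mpr ⟨by omega, by omega⟩
    have hu : |u| = u := abs_of_pos (by omega)
    have hv : |v| = v := abs_of_pos (by omega)
    have huv : |u - v| ≤ u + v - 2 := abs_le.mpr ⟨by omega, by omega⟩
    omega
  · have hb : |b| = b := abs_of_pos (by omega)
    have hab' : |a - b| ≤ b - a := abs_le.mpr ⟨by omega, by omega⟩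
    omega
  · have ha : |a| = a := abs_of_pos (by omega)
    omega
  · have ha : |a| = a := abs_of_pos (by omega)
    have hab' : |a - b| ≤ a - b := abs_le.mpr ⟨by omega, by omega⟩
    omega
  · have ha : |a| = a := abs_of_pos (by omega)
    have hb : |b| = b := abs_of_pos (by omega)
    have hab' : |a - b| ≤ a + b - 2 * p - 2 := abs_le.mpr ⟨by omega, by omega⟩
    omega

/-- If `d ≥ 2`, `1 ≤ p < k`, `k + p` is odd, `α = (k+p−1)/2` and `β = (k−p−1)/2`, then any
two points of `C' = C(d, α, β) ∪ T ∪ S` are displaced distance-`k` neighbors: for all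
`x, y ∈ C'`, `x ∈ N(y, p, k)`; so `C'` is a clique of the displacement graph `G(d, p, k)`. -/
theorem stmt10 (d : ℕ) (hd : 2 ≤ d) (p k : ℕ) (hp : 1 ≤ p) (hpk : p < k)
    (hodd : Odd (k + p))
    (α β : ℤ) (hα : 2 * α = (k : ℤ) + (p : ℤ) - 1) (hβ : 2 * β = (k : ℤ) - (p : ℤ) - 1)
    (x y : Fin d → ℤ)
    (hx : x ∈ Cset d α β ∪ Tset d (p : ℤ) β ∪ Sset d (p : ℤ) α β)
    (hy : y ∈ Cset d α β ∪ Tset d (p : ℤ) β ∪ Sset d (p : ℤ) α β) :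
    inN p k y x := by
  have hd1 : (0 : ℕ) < d := by omega
  have hd2 : (1 : ℕ) < d := hd
  have hp' : (1 : ℤ) ≤ (p : ℤ) := by exact_mod_cast hp
  have hβ0 : (0 : ℤ) ≤ β := by omega
  have hab : α = β + (p : ℤ) := by omega
  have hx' := mem_profile hd2 (p : ℤ) α β x hx
  have hy' := mem_profile hd2 (p : ℤ) α β y hy
  have hAB := pairAB (p : ℤ) α β hp' hβ0 hab
      (coord x 0) (coord x 1) (tail2 x) (coord y 0) (coord y 1) (tail2 y)
      (tail2_nonneg x) (tail2_nonneg y) hx' hy'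
  have hTle : tailSum (x - y) ≤ |coord x 1 - coord y 1| + tail2 x + tail2 y := by
    rw [tailSum_eq hd2, coord_sub]
    have := tail2_sub_le x y
    omega
  have huv : |coord x 1 - coord y 1| ≤ |coord x 1| + |coord y 1| :=
    abs_sub (coord x 1) (coord y 1)
  have hT0 : 0 ≤ tailSum (x - y) := tailSum_nonneg _
  have e1eq : norm1 (x - (y + (p : ℤ) • e1))
      = |coord x 0 - coord y 0 - (p : ℤ)| + tailSum (x - y) := norm1_shift hd1 x y (p : ℤ)
  have e2eq : norm1 (x - (y - (p : ℤ) • e1))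
      = |coord x 0 - coord y 0 + (p : ℤ)| + tailSum (x - y) := by
    have h : y - (p : ℤ) • e1 = y + (-(p : ℤ)) • e1 := by
      rw [neg_smul, sub_eq_add_neg]
    rw [h, norm1_shift hd1 x y (-(p : ℤ)), sub_neg_eq_add]
  rw [inN, e1eq, e2eq]
  exact keyLem (p : ℤ) (k : ℤ) (coord x 0 - coord y 0) (tailSum (x - y)) hT0
    (by omega) (by omega)
end

section
/- Let d ≥ 1 and let k be an odd natural number. Let B = { x ∈ ℤ^d : ‖x‖₁ ≤ (k−1)/2 } and E = { x ∈ ℤ^d : ‖x‖₁ = (k+1)/2 and x₁ ≥ 1 }. Then any two points x, y ∈ B ∪ E satisfy ‖x − y‖₁ ≤ k; that is, B ∪ E is a distance-k clique of the lattice (the clique underlying the lower bound for the number of colors of a distance-k coloring with no displacement). -/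
open Finset

lemma norm1_tri {d : ℕ} (x y : Fin d → ℤ) : norm1 (x - y) ≤ norm1 x + norm1 y := by
  unfold norm1
  rw [← Finset.sum_add_distrib]
  exact Finset.sum_le_sum fun i _ => abs_sub (x i) (y i)

lemma norm1_split_s12 {d : ℕ} (i0 : Fin d) (z : Fin d → ℤ) :
    norm1 z = |z i0| + ∑ i ∈ Finset.univ.erase i0, |z i| :=
  (Finset.add_sum_erase _ _ (Finset.mem_univ i0)).symm

lemma norm1_tri' {d : ℕ} (i0 : Fin d) (x y : Fin d → ℤ)
    (hx : 1 ≤ x i0) (hy : 1 ≤ y i0) :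
    norm1 (x - y) ≤ norm1 x + norm1 y - 2 := by
  rw [norm1_split_s12 i0 (x - y), norm1_split_s12 i0 x, norm1_split_s12 i0 y]
  have h1 : |x i0 - y i0| ≤ |x i0| + |y i0| - 2 := by
    rw [abs_of_pos (by omega : (0:ℤ) < x i0), abs_of_pos (by omega : (0:ℤ) < y i0),
      abs_le]
    omega
  have h2 : ∑ i ∈ Finset.univ.erase i0, |(x - y) i| ≤
      ∑ i ∈ Finset.univ.erase i0, (|x i| + |y i|) :=
    Finset.sum_le_sum fun i _ => abs_sub (x i) (y i)
  rw [Finset.sum_add_distrib] at h2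
  simp only [Pi.sub_apply] at *
  linarith

/-- For `d ≥ 1` and odd `k`, the set `B ∪ E`, where `B = { x : ‖x‖₁ ≤ (k−1)/2 }` and
`E = { x : ‖x‖₁ = (k+1)/2 and x₁ ≥ 1 }`, is a distance-`k` clique of the lattice:
any two of its points are at L1 distance at most `k`. -/
theorem stmt12 (d : ℕ) (hd : 0 < d) (k : ℕ) (hk : Odd k)
    (x y : Fin d → ℤ)
    (hx : x ∈ {z : Fin d → ℤ | norm1 z ≤ ((k : ℤ) - 1) / 2} ∪
          {z : Fin d → ℤ | norm1 z = ((k : ℤ) + 1) / 2 ∧ 1 ≤ z ⟨0, hd⟩})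
    (hy : y ∈ {z : Fin d → ℤ | norm1 z ≤ ((k : ℤ) - 1) / 2} ∪
          {z : Fin d → ℤ | norm1 z = ((k : ℤ) + 1) / 2 ∧ 1 ≤ z ⟨0, hd⟩}) :
    norm1 (x - y) ≤ (k : ℤ) := by
  obtain ⟨m, hm⟩ := hk
  have hk1 : ((k:ℤ) - 1) / 2 = m := by omega
  have hk2 : ((k:ℤ) + 1) / 2 = m + 1 := by omega
  rw [hk1, hk2] at hx hy
  have htri := norm1_tri x y
  rcases hx with hx | ⟨hx, hx1⟩ <;> rcases hy with hy | ⟨hy, hy1⟩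
  · simp only [Set.mem_setOf_eq] at hx hy; omega
  · simp only [Set.mem_setOf_eq] at hx hy; omega
  · simp only [Set.mem_setOf_eq] at hx hy; omega
  · have := norm1_tri' ⟨0, hd⟩ x y hx1 hy1
    omega
end

section
/- Let d ≥ 2 and let p, k be natural numbers with 1 ≤ p < k and k + p odd, and set β = (k−p−1)/2. If x, y ∈ T and x₁ ≤ y₁, then |y₁ − p − x₁| + ∑_{i=2}^d |y_i − x_i| ≤ k; in particular x ∈ N(y,p,k). -/
open Finset

lemma tailSum_split {d : ℕ} (hd : 2 ≤ d) (z : Fin d → ℤ) :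
    tailSum z = |z ⟨1, by omega⟩| +
      ∑ i ∈ Finset.univ.filter (fun i : Fin d => (i : ℕ) ≠ 0 ∧ (i : ℕ) ≠ 1), |z i| := by
  rw [tailSum, ← Finset.sum_filter_add_sum_filter_not
    (Finset.univ.filter (fun i : Fin d => (i : ℕ) ≠ 0)) (fun i : Fin d => (i : ℕ) = 1)]
  congr 1
  · have : (Finset.univ.filter (fun i : Fin d => (i : ℕ) ≠ 0)).filter
        (fun i : Fin d => (i : ℕ) = 1) = {(⟨1, by omega⟩ : Fin d)} := by
      ext i; simp [Fin.ext_iff]; omega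
    rw [this, Finset.sum_singleton]
  · rw [Finset.filter_filter]

/-- If `d ≥ 2`, `1 ≤ p < k`, `k + p` is odd and `β = (k−p−1)/2`, then for `x, y ∈ T` with
`x₁ ≤ y₁` we have `|y₁ − p − x₁| + ∑_{i=2}^d |y_i − x_i| ≤ k`; in particular `x ∈ N(y, p, k)`. -/
theorem stmt13 (d : ℕ) (hd : 2 ≤ d) (p k : ℕ) (hp : 1 ≤ p) (hpk : p < k)
    (hodd : Odd (k + p)) (β : ℤ) (hβ : 2 * β = (k : ℤ) - (p : ℤ) - 1)
    (x y : Fin d → ℤ) (hx : x ∈ Tset d (p : ℤ) β) (hy : y ∈ Tset d (p : ℤ) β)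
    (hxy : coord x 0 ≤ coord y 0) :
    |coord y 0 - (p : ℤ) - coord x 0| + tailSum (y - x) ≤ (k : ℤ) ∧ inN p k y x := by
  have h0 : (0 : ℕ) < d := by omega
  have h1 : (1 : ℕ) < d := by omega
  set i0 : Fin d := ⟨0, h0⟩
  set i1 : Fin d := ⟨1, h1⟩
  obtain ⟨hx1, hx2, hx3, hx4, hx5⟩ := hx
  obtain ⟨hy1, hy2, hy3, hy4, hy5⟩ := hy
  have hc0x : coord x 0 = x i0 := by simp [coord, h0, i0]
  have hc0y : coord y 0 = y i0 := by simp [coord, h0, i0]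
  have hc1x : coord x 1 = x i1 := by simp [coord, h1, i1]
  have hc1y : coord y 1 = y i1 := by simp [coord, h1, i1]
  set S2 := Finset.univ.filter (fun i : Fin d => (i : ℕ) ≠ 0 ∧ (i : ℕ) ≠ 1) with hS2
  have hsx : tailSum x = |x i1| + ∑ i ∈ S2, |x i| := tailSum_split hd x
  have hsy : tailSum y = |y i1| + ∑ i ∈ S2, |y i| := tailSum_split hd y
  have hsxy : tailSum (y - x) = |y i1 - x i1| + ∑ i ∈ S2, |y i - x i| := by
    simpa using tailSum_split hd (y - x)
  have htri : ∑ i ∈ S2, |y i - x i| ≤ ∑ i ∈ S2, |y i| + ∑ i ∈ S2, |x i| := by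
    rw [← Finset.sum_add_distrib]
    exact Finset.sum_le_sum (fun i _ => abs_sub _ _)
  have habsx : |x i1| = x i1 := abs_of_pos (by rw [← hc1x]; omega)
  have habsy : |y i1| = y i1 := abs_of_pos (by rw [← hc1y]; omega)
  have key : |coord y 0 - (p : ℤ) - coord x 0| + tailSum (y - x) ≤ (k : ℤ) := by
    rw [hsxy]
    rw [hsx, habsx] at hx5
    rw [hsy, habsy] at hy5
    rw [hc1x] at hx3 hx4; rw [hc1y] at hy3 hy4
    rcases abs_cases (coord y 0 - (p : ℤ) - coord x 0) with ⟨e1, _⟩ | ⟨e1, _⟩ <;>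
      rcases abs_cases (y i1 - x i1) with ⟨e2, _⟩ | ⟨e2, _⟩ <;> rw [e1, e2] <;> linarith
  refine ⟨key, Or.inr ?_⟩
  have : norm1 (x - (y - (p : ℤ) • e1)) =
      |coord y 0 - (p : ℤ) - coord x 0| + tailSum (y - x) := by
    rw [norm1_split h0]
    congr 1
    · have : ((x - (y - (p : ℤ) • e1)) : Fin d → ℤ) i0 = x i0 - y i0 + (p : ℤ) := by
        simp [e1, i0]; ring
      rw [this, hc0x, hc0y, ← abs_neg]; ring_nf
    · rw [tailSum, tailSum]
      apply Finset.sum_congr rfl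
      intro i hi
      simp only [Finset.mem_filter] at hi
      have he : e1 i = (0 : ℤ) := by simp [e1, hi.2]
      simp [he, abs_sub_comm (x i) (y i)]
  rw [this]
  exact key
end

section
/- Let d ≥ 2 and let p, k be natural numbers with 1 ≤ p < k and k + p odd, and set α = (k+p−1)/2 and β = (k−p−1)/2. If x, y ∈ S and x₁ ≤ y₁, then |y₁ − p − x₁| + ∑_{i=2}^d |y_i − x_i| ≤ k; in particular x ∈ N(y,p,k). -/
open Finset

/-- If `d ≥ 2`, `1 ≤ p < k`, `k + p` is odd, `α = (k+p−1)/2` and `β = (k−p−1)/2`, then for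
`x, y ∈ S` with `x₁ ≤ y₁` we have `|y₁ − p − x₁| + ∑_{i=2}^d |y_i − x_i| ≤ k`; in particular
`x ∈ N(y, p, k)`. -/
theorem stmt14 (d : ℕ) (hd : 2 ≤ d) (p k : ℕ) (hp : 1 ≤ p) (hpk : p < k)
    (hodd : Odd (k + p))
    (α β : ℤ) (hα : 2 * α = (k : ℤ) + (p : ℤ) - 1) (hβ : 2 * β = (k : ℤ) - (p : ℤ) - 1)
    (x y : Fin d → ℤ) (hx : x ∈ Sset d (p : ℤ) α β) (hy : y ∈ Sset d (p : ℤ) α β)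
    (hxy : coord x 0 ≤ coord y 0) :
    |coord y 0 - (p : ℤ) - coord x 0| + tailSum (y - x) ≤ (k : ℤ) ∧ inN p k y x := by
  have hd0 : 0 < d := by omega
  set i0 : Fin d := ⟨0, hd0⟩ with hi0
  have hfilter : Finset.univ.filter (fun i : Fin d => (i : ℕ) ≠ 0) = Finset.univ.erase i0 := by
    ext i
    simp [Fin.ext_iff, i0]
  have hsplit : ∀ z : Fin d → ℤ, norm1 z = |z i0| + tailSum z := by
    intro z
    rw [norm1, tailSum, hfilter]
    exact (Finset.add_sum_erase Finset.univ (fun i => |z i|) (Finset.mem_univ i0)).symm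
  have hc : ∀ z : Fin d → ℤ, coord z 0 = z i0 := by
    intro z; simp [coord, hd0, i0]
  obtain ⟨hx1, hx2, hx3, hx4⟩ := hx
  obtain ⟨hy1, hy2, hy3, hy4⟩ := hy
  simp only [hc] at hx1 hx2 hxy hy1 hy2 ⊢
  have hp' : (1 : ℤ) ≤ (p : ℤ) := by exact_mod_cast hp
  have hpk' : (p : ℤ) < (k : ℤ) := by exact_mod_cast hpk
  have hxT : tailSum x = α + 1 - x i0 := by
    have h1 := hsplit x
    rw [abs_of_pos (by linarith)] at h1
    linarith [hx4, h1]
  have hyT : tailSum y = α + 1 - y i0 := by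
    have h1 := hsplit y
    rw [abs_of_pos (by linarith)] at h1
    linarith [hy4, h1]
  have ht : tailSum (y - x) ≤ tailSum y + tailSum x := by
    rw [tailSum, tailSum, tailSum, ← Finset.sum_add_distrib]
    apply Finset.sum_le_sum
    intro i _
    simpa using abs_sub (y i) (x i)
  have key : |y i0 - (p : ℤ) - x i0| + tailSum (y - x) ≤ (k : ℤ) := by
    rcases abs_cases (y i0 - (p : ℤ) - x i0) with ⟨h1, h2⟩ | ⟨h1, h2⟩ <;>
      linarith
  refine ⟨key, Or.inr ?_⟩
  have heq : norm1 (x - (y - (p : ℤ) • e1)) = |y i0 - (p : ℤ) - x i0| + tailSum (y - x) := by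
    rw [hsplit]
    congr 1
    · have he1 : e1 (d := d) i0 = 1 := by simp [e1, hi0]
      have h0 : (x - (y - (p : ℤ) • (e1 : Fin d → ℤ))) i0 = -(y i0 - (p : ℤ) - x i0) := by
        simp only [Pi.sub_apply, Pi.smul_apply, he1, smul_eq_mul, mul_one]
        ring
      rw [h0, abs_neg]
    · rw [tailSum, tailSum]
      apply Finset.sum_congr rfl
      intro i hi
      simp only [Finset.mem_filter] at hi
      have he : e1 (d := d) i = 0 := by simp [e1, hi.2]
      simp [he, abs_sub_comm]
  rw [heq]
  exact key
end

section
/- For integers α ≥ β ≥ 0, the cardinality of the finite set C(3,α,β) = { x ∈ ℤ³ : |x₁| + |x₂| + |x₃| ≤ α and |x₂| + |x₃| ≤ β } satisfies 3·|C(3,α,β)| = −8β³ + (12α − 6)β² + (12α + 2)β + 6α + 3. -/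
open Finset

lemma icc_succ (t : ℤ) (ht : 0 ≤ t) :
    Finset.Icc (-(t+1)) (t+1) = insert (t+1) (insert (-(t+1)) (Finset.Icc (-t) t)) := by
  ext x; simp [Finset.mem_Icc]; omega

lemma sum_abs_nat (n : ℕ) : ∑ c ∈ Finset.Icc (-(n:ℤ)) (n:ℤ), |c| = (n:ℤ)^2 + (n:ℤ) := by
  induction n with
  | zero => norm_num
  | succ n ih =>
    have hcast : ((n+1 : ℕ) : ℤ) = (n:ℤ)+1 := by push_cast; ring
    have h1 : ((n:ℤ)+1) ∉ insert (-((n:ℤ)+1)) (Finset.Icc (-(n:ℤ)) (n:ℤ)) := by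
      simp [Finset.mem_Icc]; omega
    have h2 : (-((n:ℤ)+1)) ∉ Finset.Icc (-(n:ℤ)) (n:ℤ) := by simp [Finset.mem_Icc]
    rw [hcast, icc_succ _ (Int.ofNat_nonneg n), Finset.sum_insert h1, Finset.sum_insert h2,
      ih, abs_of_nonneg (by positivity : (0:ℤ) ≤ (n:ℤ)+1), abs_neg,
      abs_of_nonneg (by positivity : (0:ℤ) ≤ (n:ℤ)+1)]
    ring

lemma sum_abs_Icc (t : ℤ) (ht : 0 ≤ t) : ∑ c ∈ Finset.Icc (-t) t, |c| = t^2 + t := by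
  obtain ⟨n, rfl⟩ := Int.eq_ofNat_of_zero_le ht
  exact sum_abs_nat n

lemma sum_sq_nat (n : ℕ) :
    3 * ∑ c ∈ Finset.Icc (-(n:ℤ)) (n:ℤ), c^2 = 2*(n:ℤ)^3 + 3*(n:ℤ)^2 + (n:ℤ) := by
  induction n with
  | zero => norm_num
  | succ n ih =>
    have hcast : ((n+1 : ℕ) : ℤ) = (n:ℤ)+1 := by push_cast; ring
    have h1 : ((n:ℤ)+1) ∉ insert (-((n:ℤ)+1)) (Finset.Icc (-(n:ℤ)) (n:ℤ)) := by
      simp [Finset.mem_Icc]; omega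
    have h2 : (-((n:ℤ)+1)) ∉ Finset.Icc (-(n:ℤ)) (n:ℤ) := by simp [Finset.mem_Icc]
    rw [hcast, icc_succ _ (Int.ofNat_nonneg n), Finset.sum_insert h1, Finset.sum_insert h2]
    have h3 : ((-((n:ℤ)+1)):ℤ)^2 = ((n:ℤ)+1)^2 := by ring
    rw [h3]
    linear_combination ih

lemma sum_sq_Icc (t : ℤ) (ht : 0 ≤ t) :
    3 * ∑ c ∈ Finset.Icc (-t) t, c^2 = 2*t^3 + 3*t^2 + t := by
  obtain ⟨n, rfl⟩ := Int.eq_ofNat_of_zero_le ht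
  exact sum_sq_nat n

lemma card_Icc_sym (t : ℤ) (ht : 0 ≤ t) : ((Finset.Icc (-t) t).card : ℤ) = 2*t+1 := by
  rw [Int.card_Icc]
  omega

/-- For integers `α ≥ β ≥ 0`, the cardinality of
`C(3, α, β) = { x ∈ ℤ³ : |x₁| + |x₂| + |x₃| ≤ α and |x₂| + |x₃| ≤ β }` satisfies
`3·|C(3, α, β)| = −8β³ + (12α − 6)β² + (12α + 2)β + 6α + 3`. -/
theorem stmt18 (α β : ℤ) (hβ : 0 ≤ β) (hαβ : β ≤ α) :
    3 * (({x : Fin 3 → ℤ | |x 0| + |x 1| + |x 2| ≤ α ∧ |x 1| + |x 2| ≤ β}.ncard : ℤ)) =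
      -8 * β ^ 3 + (12 * α - 6) * β ^ 2 + (12 * α + 2) * β + 6 * α + 3 := by
  have hα : 0 ≤ α := le_trans hβ hαβ
  set G : Finset ((ℤ × ℤ) × ℤ) :=
    ((Finset.Icc (-β) β ×ˢ Finset.Icc (-β) β) ×ˢ Finset.Icc (-α) α).filter
      (fun p => |p.2| + |p.1.1| + |p.1.2| ≤ α ∧ |p.1.1| + |p.1.2| ≤ β) with hG
  have hinj : Function.Injective (fun p : (ℤ × ℤ) × ℤ => ![p.2, p.1.1, p.1.2]) := by
    intro p q h
    have h0 := congrFun h 0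
    have h1 := congrFun h 1
    have h2 := congrFun h 2
    simp at h0 h1 h2
    exact Prod.ext (Prod.ext h1 h2) h0
  -- Step 1: the set is the image of G
  have himg : {x : Fin 3 → ℤ | |x 0| + |x 1| + |x 2| ≤ α ∧ |x 1| + |x 2| ≤ β}
      = (fun p : (ℤ × ℤ) × ℤ => ![p.2, p.1.1, p.1.2]) '' ↑G := by
    ext x
    simp only [Set.mem_setOf_eq, Set.mem_image, Finset.mem_coe, hG, Finset.mem_filter,
      Finset.mem_product, Finset.mem_Icc]
    constructor
    · rintro ⟨h1, h2⟩
      refine ⟨((x 1, x 2), x 0), ⟨⟨⟨?_, ?_⟩, ?_⟩, ?_, ?_⟩, ?_⟩ <;> dsimp only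
      · rcases abs_cases (x 1) with ⟨e, _⟩ | ⟨e, _⟩ <;>
        · have := abs_nonneg (x 2); omega
      · rcases abs_cases (x 2) with ⟨e, _⟩ | ⟨e, _⟩ <;>
        · have := abs_nonneg (x 1); omega
      · rcases abs_cases (x 0) with ⟨e, _⟩ | ⟨e, _⟩ <;>
        · have := abs_nonneg (x 1); have := abs_nonneg (x 2); omega
      · exact h1
      · exact h2
      · funext i; fin_cases i <;> simp
    · rintro ⟨p, ⟨_, hc1, hc2⟩, rfl⟩
      simp only [Matrix.cons_val_zero, Matrix.cons_val_one, Matrix.head_cons,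
        Matrix.cons_val_two, Matrix.tail_cons]
      exact ⟨hc1, hc2⟩
  rw [himg, Set.ncard_image_of_injective _ hinj, Set.ncard_coe_finset]
  -- Step 2: card as a double sum
  have hstep2 : (G.card : ℤ)
      = ∑ q ∈ Finset.Icc (-β) β ×ˢ Finset.Icc (-β) β, ∑ a ∈ Finset.Icc (-α) α,
          (if |a| + |q.1| + |q.2| ≤ α ∧ |q.1| + |q.2| ≤ β then (1:ℤ) else 0) := by
    rw [hG, Finset.card_filter, ← Finset.sum_product']
    push_cast
    rfl
  rw [hstep2]
  -- Step 3: inner sum over a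
  have hinner : ∀ q ∈ Finset.Icc (-β) β ×ˢ Finset.Icc (-β) β,
      ∑ a ∈ Finset.Icc (-α) α,
          (if |a| + |q.1| + |q.2| ≤ α ∧ |q.1| + |q.2| ≤ β then (1:ℤ) else 0)
      = (if |q.1| + |q.2| ≤ β then 2*(α - |q.1| - |q.2|) + 1 else 0) := by
    rintro ⟨b, c⟩ hq
    simp only
    by_cases hs : |b| + |c| ≤ β
    · simp only [hs, and_true, if_true]
      rw [Finset.sum_boole]
      have hfe : (Finset.Icc (-α) α).filter (fun a => |a| + |b| + |c| ≤ α)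
          = Finset.Icc (-(α - |b| - |c|)) (α - |b| - |c|) := by
        ext a
        simp only [Finset.mem_filter, Finset.mem_Icc]
        have hb0 := abs_nonneg b
        have hc0 := abs_nonneg c
        rcases abs_cases a with ⟨e, _⟩ | ⟨e, _⟩ <;> omega
      rw [hfe]
      have ht : (0:ℤ) ≤ α - |b| - |c| := by
        have hb0 := abs_nonneg b; have hc0 := abs_nonneg c; omega
      have := card_Icc_sym (α - |b| - |c|) ht
      push_cast
      omega
    · simp [hs]
  rw [Finset.sum_congr rfl hinner, Finset.sum_product]
  -- Step 4: inner sum over c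
  have hc' : ∀ b ∈ Finset.Icc (-β) β,
      ∑ c ∈ Finset.Icc (-β) β,
          (if |b| + |c| ≤ β then 2*(α - |b| - |c|) + 1 else 0)
      = 2*b^2 - (4*α+2)*|b| + (4*α*β + 2*α + 1 - 2*β^2) := by
    intro b hb
    rw [Finset.mem_Icc] at hb
    have hbβ : |b| ≤ β := abs_le.mpr hb
    have hb0 := abs_nonneg b
    rw [← Finset.sum_filter]
    have hfe : (Finset.Icc (-β) β).filter (fun c => |b| + |c| ≤ β)
        = Finset.Icc (-(β - |b|)) (β - |b|) := by
      ext c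
      simp only [Finset.mem_filter, Finset.mem_Icc]
      rcases abs_cases c with ⟨e, _⟩ | ⟨e, _⟩ <;> omega
    rw [hfe]
    have hrw : ∀ c ∈ Finset.Icc (-(β - |b|)) (β - |b|),
        2*(α - |b| - |c|) + 1 = (2*α - 2*|b| + 1) - 2*|c| := fun c _ => by ring
    rw [Finset.sum_congr rfl hrw, Finset.sum_sub_distrib, Finset.sum_const,
      ← Finset.mul_sum, sum_abs_Icc (β - |b|) (by omega), nsmul_eq_mul,
      card_Icc_sym (β - |b|) (by omega)]
    have hsq := sq_abs b
    nlinarith [sq_abs b]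
  rw [Finset.sum_congr rfl hc', Finset.sum_add_distrib, Finset.sum_sub_distrib,
    Finset.sum_const, ← Finset.mul_sum, ← Finset.mul_sum,
    sum_abs_Icc β hβ, nsmul_eq_mul, card_Icc_sym β hβ]
  have hsq := sum_sq_Icc β hβ
  linear_combination 2 * hsq
end

section
/- For integers α ≥ β ≥ 0, the cardinality of the finite set C(4,α,β) = { x ∈ ℤ⁴ : |x₁| + |x₂| + |x₃| + |x₄| ≤ α and |x₂| + |x₃| + |x₄| ≤ β } satisfies 3·|C(4,α,β)| = 2(4β³ + 6β² + 8β + 3)α − 6β⁴ − 8β³ − 6β² + 2β + 3. -/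
open Finset

private lemma icc_insert (n : ℤ) (hn : 0 ≤ n) :
    Finset.Icc 1 (n + 1) = insert (n + 1) (Finset.Icc 1 n) := by
  ext a; simp only [Finset.mem_Icc, Finset.mem_insert]; omega

private lemma sym_sum (n : ℤ) (hn : 0 ≤ n) (f : ℤ → ℤ) :
    ∑ a ∈ Finset.Icc (-n) n, f |a| = f 0 + 2 * ∑ a ∈ Finset.Icc 1 n, f a := by
  have h1 : Finset.Icc (-n) n = Finset.Icc (-n) (-1) ∪ Finset.Icc 0 n := by
    ext a; simp only [Finset.mem_Icc, Finset.mem_union]; omega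
  have hd : Disjoint (Finset.Icc (-n) (-1)) (Finset.Icc 0 n) := by
    rw [Finset.disjoint_left]; intro a ha hb
    simp only [Finset.mem_Icc] at ha hb; omega
  have h2 : Finset.Icc (-n) (-1) = (Finset.Icc 1 n).image Neg.neg := by
    ext a
    simp only [Finset.mem_Icc, Finset.mem_image]
    constructor
    · intro h; exact ⟨-a, by omega, by ring⟩
    · rintro ⟨b, hb, rfl⟩; omega
  have h3 : Finset.Icc (0 : ℤ) n = insert 0 (Finset.Icc 1 n) := by
    ext a; simp only [Finset.mem_Icc, Finset.mem_insert]; omega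
  rw [h1, Finset.sum_union hd, h2,
    Finset.sum_image (by intro x _ y _ h; omega), h3,
    Finset.sum_insert (by simp)]
  have e1 : ∑ a ∈ Finset.Icc 1 n, f |(-a)| = ∑ a ∈ Finset.Icc 1 n, f a := by
    apply Finset.sum_congr rfl
    intro a ha
    simp only [Finset.mem_Icc] at ha
    rw [abs_neg, abs_of_nonneg (by omega)]
  have e2 : ∑ a ∈ Finset.Icc 1 n, f |a| = ∑ a ∈ Finset.Icc 1 n, f a := by
    apply Finset.sum_congr rfl
    intro a ha
    simp only [Finset.mem_Icc] at ha
    rw [abs_of_nonneg (by omega)]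
  rw [e1, e2, abs_zero]; ring


private lemma icc_sum_closed (f g : ℤ → ℤ) (h0 : g 0 = 0)
    (hstep : ∀ n : ℤ, 0 ≤ n → g (n + 1) = g n + f (n + 1)) :
    ∀ n : ℤ, 0 ≤ n → ∑ a ∈ Finset.Icc 1 n, f a = g n := by
  intro n hn
  obtain ⟨k, rfl⟩ := Int.eq_ofNat_of_zero_le hn
  clear hn
  induction k with
  | zero => simpa using h0.symm
  | succ k ih =>
    have hc : ((k + 1 : ℕ) : ℤ) = (k : ℤ) + 1 := by push_cast; ring
    rw [hc, icc_insert _ (by positivity), Finset.sum_insert (by simp),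
      hstep _ (by positivity), ih]
    ring

private lemma sumA (m n : ℤ) (hn : 0 ≤ n) :
    ∑ a ∈ Finset.Icc 1 n, (2 * (m - a) + 1) = 2 * m * n - n ^ 2 :=
  icc_sum_closed _ (fun n => 2 * m * n - n ^ 2) (by ring)
    (fun n _ => by ring) n hn

private lemma sumB (n : ℤ) (hn : 0 ≤ n) :
    ∑ a ∈ Finset.Icc 1 n, (2 * a) = n ^ 2 + n :=
  icc_sum_closed _ (fun n => n ^ 2 + n) (by ring) (fun n _ => by ring) n hn

private lemma sumC (m n : ℤ) (hn : 0 ≤ n) :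
    ∑ a ∈ Finset.Icc 1 n, (6 * (m ^ 2 + m) - 6 * a ^ 2) =
      6 * m ^ 2 * n + 6 * m * n - 2 * n ^ 3 - 3 * n ^ 2 - n :=
  icc_sum_closed _ (fun n => 6 * m ^ 2 * n + 6 * m * n - 2 * n ^ 3 - 3 * n ^ 2 - n)
    (by ring) (fun n _ => by ring) n hn

private lemma sumD (m n : ℤ) (hn : 0 ≤ n) :
    ∑ a ∈ Finset.Icc 1 n, (6 * (m - a) ^ 2 + 6 * (m - a) + 3) =
      6 * m ^ 2 * n - 6 * m * n ^ 2 + 2 * n ^ 3 + n :=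
  icc_sum_closed _ (fun n => 6 * m ^ 2 * n - 6 * m * n ^ 2 + 2 * n ^ 3 + n)
    (by ring) (fun n _ => by ring) n hn

private lemma sumE (m n : ℤ) (hn : 0 ≤ n) :
    ∑ a ∈ Finset.Icc 1 n, (12 * a * (2 * (m - a) ^ 2 + 2 * (m - a) + 1)
        + 16 * (m - a) ^ 3 + 24 * (m - a) ^ 2 + 8 * (m - a)) =
      16 * m ^ 3 * n - 12 * m ^ 2 * n ^ 2 + 12 * m ^ 2 * n - 12 * m * n ^ 2 - 4 * m * n
        + 2 * n ^ 4 + 4 * n ^ 3 + 4 * n ^ 2 + 2 * n :=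
  icc_sum_closed _ (fun n => 16 * m ^ 3 * n - 12 * m ^ 2 * n ^ 2 + 12 * m ^ 2 * n
      - 12 * m * n ^ 2 - 4 * m * n + 2 * n ^ 4 + 4 * n ^ 3 + 4 * n ^ 2 + 2 * n)
    (by ring) (fun n _ => by ring) n hn

private noncomputable def ball1 (n : ℤ) : Finset ℤ := Finset.Icc (-n) n

private noncomputable def ball2 (m : ℤ) : Finset (ℤ × ℤ) :=
  (Finset.Icc (-m) m).biUnion fun a => (ball1 (m - |a|)).image fun b => (a, b)

private noncomputable def ball3 (n : ℤ) : Finset (ℤ × ℤ × ℤ) :=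
  (Finset.Icc (-n) n).biUnion fun a => (ball2 (n - |a|)).image fun p => (a, p)

private noncomputable def C4 (α β : ℤ) : Finset (ℤ × ℤ × ℤ × ℤ) :=
  (ball3 β).biUnion fun y =>
    (ball1 (α - |y.1| - |y.2.1| - |y.2.2|)).image fun t => (t, y)

private lemma mem_ball1 {n x : ℤ} : x ∈ ball1 n ↔ |x| ≤ n := by
  simp [ball1, Finset.mem_Icc, abs_le]

private lemma sum_ball2 {M : Type*} [AddCommMonoid M] (m : ℤ) (g : ℤ × ℤ → M) :
    ∑ p ∈ ball2 m, g p =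
      ∑ a ∈ Finset.Icc (-m) m, ∑ b ∈ ball1 (m - |a|), g (a, b) := by
  rw [ball2, Finset.sum_biUnion]
  · exact Finset.sum_congr rfl fun a _ =>
      Finset.sum_image (by intro x _ y _ h; exact (Prod.mk.injEq _ _ _ _ ▸ h).2)
  · intro a _ a' _ haa'
    simp only [Function.onFun]; rw [Finset.disjoint_left]
    rintro p hp hp'
    simp only [Finset.mem_image] at hp hp'
    obtain ⟨b, _, rfl⟩ := hp
    obtain ⟨b', _, h⟩ := hp'
    exact haa' (congrArg Prod.fst h).symm

private lemma sum_ball3 {M : Type*} [AddCommMonoid M] (n : ℤ) (g : ℤ × ℤ × ℤ → M) :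
    ∑ p ∈ ball3 n, g p =
      ∑ a ∈ Finset.Icc (-n) n, ∑ q ∈ ball2 (n - |a|), g (a, q) := by
  rw [ball3, Finset.sum_biUnion]
  · exact Finset.sum_congr rfl fun a _ =>
      Finset.sum_image (by intro x _ y _ h; exact (Prod.mk.injEq _ _ _ _ ▸ h).2)
  · intro a _ a' _ haa'
    simp only [Function.onFun]; rw [Finset.disjoint_left]
    rintro p hp hp'
    simp only [Finset.mem_image] at hp hp'
    obtain ⟨b, _, rfl⟩ := hp
    obtain ⟨b', _, h⟩ := hp'
    exact haa' (congrArg Prod.fst h).symm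

private lemma sum_C4 {M : Type*} [AddCommMonoid M] (α β : ℤ) (g : ℤ × ℤ × ℤ × ℤ → M) :
    ∑ p ∈ C4 α β, g p =
      ∑ y ∈ ball3 β, ∑ t ∈ ball1 (α - |y.1| - |y.2.1| - |y.2.2|), g (t, y) := by
  rw [C4, Finset.sum_biUnion]
  · exact Finset.sum_congr rfl fun a _ =>
      Finset.sum_image (by intro x _ y _ h; exact (Prod.mk.injEq _ _ _ _ ▸ h).1)
  · intro y _ y' _ hyy'
    simp only [Function.onFun]; rw [Finset.disjoint_left]
    rintro p hp hp'
    simp only [Finset.mem_image] at hp hp'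
    obtain ⟨b, _, rfl⟩ := hp
    obtain ⟨b', _, h⟩ := hp'
    exact hyy' (congrArg Prod.snd h).symm

private lemma card_ball1 (n : ℤ) (hn : 0 ≤ n) : ((ball1 n).card : ℤ) = 2 * n + 1 := by
  rw [ball1, Int.card_Icc, Int.toNat_of_nonneg (by omega)]; ring

private lemma n2 (m : ℤ) (hm : 0 ≤ m) : ((ball2 m).card : ℤ) = 2 * m ^ 2 + 2 * m + 1 := by
  have h0 : ((ball2 m).card : ℤ) = ∑ p ∈ ball2 m, (1 : ℤ) := by simp
  rw [h0, sum_ball2]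
  have h1 : ∀ a ∈ Finset.Icc (-m) m,
      (∑ _b ∈ ball1 (m - |a|), (1 : ℤ)) = (fun v => 2 * (m - v) + 1) |a| := by
    intro a ha
    simp only [Finset.mem_Icc] at ha
    rw [Finset.sum_const, nsmul_eq_mul, mul_one]
    exact card_ball1 _ (by have := abs_le.mpr ⟨ha.1, ha.2⟩; omega)
  rw [Finset.sum_congr rfl h1, sym_sum m hm (fun v => 2 * (m - v) + 1), sumA m m hm]
  ring

private lemma w1 (k : ℤ) (hk : 0 ≤ k) :
    ∑ b ∈ ball1 k, |b| = k ^ 2 + k := by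
  have h1 : ∀ b ∈ Finset.Icc (-k) k, |b| = (fun v => v) |b| := fun b _ => rfl
  rw [ball1, Finset.sum_congr rfl h1, sym_sum k hk (fun v => v)]
  have h2 : (2 : ℤ) * ∑ a ∈ Finset.Icc 1 k, a = ∑ a ∈ Finset.Icc 1 k, 2 * a := by
    rw [Finset.mul_sum]
  rw [h2, sumB k hk]
  ring

private lemma w2 (m : ℤ) (hm : 0 ≤ m) :
    3 * ∑ p ∈ ball2 m, (|p.1| + |p.2|) = 4 * m ^ 3 + 6 * m ^ 2 + 2 * m := by
  rw [sum_ball2]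
  have h1 : ∀ a ∈ Finset.Icc (-m) m,
      (∑ b ∈ ball1 (m - |a|), (|a| + |b|)) = (fun v => m ^ 2 + m - v ^ 2) |a| := by
    intro a ha
    simp only [Finset.mem_Icc] at ha
    have hu : 0 ≤ m - |a| := by have := abs_le.mpr ⟨ha.1, ha.2⟩; omega
    rw [Finset.sum_add_distrib, Finset.sum_const, nsmul_eq_mul, w1 _ hu, card_ball1 _ hu]
    ring
  rw [Finset.sum_congr rfl h1, sym_sum m hm (fun v => m ^ 2 + m - v ^ 2)]
  have h2 : (6 : ℤ) * ∑ a ∈ Finset.Icc 1 m, (m ^ 2 + m - a ^ 2)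
      = ∑ a ∈ Finset.Icc 1 m, (6 * (m ^ 2 + m) - 6 * a ^ 2) := by
    rw [Finset.mul_sum]; exact Finset.sum_congr rfl fun a _ => by ring
  have h3 := sumC m m hm
  rw [← h2] at h3
  linarith [h3]

private lemma n3 (b : ℤ) (hb : 0 ≤ b) :
    3 * ((ball3 b).card : ℤ) = 4 * b ^ 3 + 6 * b ^ 2 + 8 * b + 3 := by
  have h0 : ((ball3 b).card : ℤ) = ∑ p ∈ ball3 b, (1 : ℤ) := by simp
  rw [h0, sum_ball3]
  have h1 : ∀ a ∈ Finset.Icc (-b) b,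
      (∑ _q ∈ ball2 (b - |a|), (1 : ℤ))
        = (fun v => 2 * (b - v) ^ 2 + 2 * (b - v) + 1) |a| := by
    intro a ha
    simp only [Finset.mem_Icc] at ha
    have hu : 0 ≤ b - |a| := by have := abs_le.mpr ⟨ha.1, ha.2⟩; omega
    rw [Finset.sum_const, nsmul_eq_mul, mul_one, n2 _ hu]
  rw [Finset.sum_congr rfl h1,
    sym_sum b hb (fun v => 2 * (b - v) ^ 2 + 2 * (b - v) + 1)]
  have h2 : (3 : ℤ) * ∑ a ∈ Finset.Icc 1 b, (2 * (b - a) ^ 2 + 2 * (b - a) + 1)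
      = ∑ a ∈ Finset.Icc 1 b, (6 * (b - a) ^ 2 + 6 * (b - a) + 3) := by
    rw [Finset.mul_sum]; exact Finset.sum_congr rfl fun a _ => by ring
  have h3 := sumD b b hb
  rw [← h2] at h3
  linarith [h3]

private lemma w3 (b : ℤ) (hb : 0 ≤ b) :
    6 * ∑ y ∈ ball3 b, (|y.1| + |y.2.1| + |y.2.2|) =
      6 * b ^ 4 + 12 * b ^ 3 + 12 * b ^ 2 + 6 * b := by
  rw [sum_ball3, Finset.mul_sum]
  have h1 : ∀ a ∈ Finset.Icc (-b) b,
      (6 * ∑ q ∈ ball2 (b - |a|), (|a| + |q.1| + |q.2|))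
        = (fun v => 6 * v * (2 * (b - v) ^ 2 + 2 * (b - v) + 1)
            + 8 * (b - v) ^ 3 + 12 * (b - v) ^ 2 + 4 * (b - v)) |a| := by
    intro a ha
    simp only [Finset.mem_Icc] at ha
    have hu : 0 ≤ b - |a| := by have := abs_le.mpr ⟨ha.1, ha.2⟩; omega
    have hsplit : ∑ q ∈ ball2 (b - |a|), (|a| + |q.1| + |q.2|)
        = ∑ q ∈ ball2 (b - |a|), (|a| + (|q.1| + |q.2|)) :=
      Finset.sum_congr rfl fun q _ => by ring
    rw [hsplit, Finset.sum_add_distrib, Finset.sum_const, nsmul_eq_mul]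
    have hc := n2 _ hu
    have hw := w2 _ hu
    simp only []
    linear_combination 6 * |a| * hc + 2 * hw
  rw [Finset.sum_congr rfl h1,
    sym_sum b hb (fun v => 6 * v * (2 * (b - v) ^ 2 + 2 * (b - v) + 1)
      + 8 * (b - v) ^ 3 + 12 * (b - v) ^ 2 + 4 * (b - v))]
  have h2 : (2 : ℤ) * ∑ a ∈ Finset.Icc 1 b, (6 * a * (2 * (b - a) ^ 2 + 2 * (b - a) + 1)
        + 8 * (b - a) ^ 3 + 12 * (b - a) ^ 2 + 4 * (b - a))
      = ∑ a ∈ Finset.Icc 1 b, (12 * a * (2 * (b - a) ^ 2 + 2 * (b - a) + 1)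
        + 16 * (b - a) ^ 3 + 24 * (b - a) ^ 2 + 8 * (b - a)) := by
    rw [Finset.mul_sum]; exact Finset.sum_congr rfl fun a _ => by ring
  have h3 := sumE b b hb
  rw [← h2] at h3
  linarith [h3]

private lemma mem_ball2 {m : ℤ} {p : ℤ × ℤ} : p ∈ ball2 m ↔ |p.1| + |p.2| ≤ m := by
  simp only [ball2, Finset.mem_biUnion, Finset.mem_image, Finset.mem_Icc, mem_ball1]
  constructor
  · rintro ⟨a, ⟨h1, h2⟩, b, hb, rfl⟩
    have := abs_le.mpr ⟨h1, h2⟩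
    simp only []
    linarith
  · intro h
    have h1 := abs_nonneg p.1
    have h2 := abs_nonneg p.2
    refine ⟨p.1, ⟨?_, ?_⟩, p.2, by linarith, rfl⟩
    · linarith [neg_abs_le p.1, le_abs_self p.1]
    · linarith [le_abs_self p.1]

private lemma mem_ball3 {n : ℤ} {p : ℤ × ℤ × ℤ} :
    p ∈ ball3 n ↔ |p.1| + |p.2.1| + |p.2.2| ≤ n := by
  simp only [ball3, Finset.mem_biUnion, Finset.mem_image, Finset.mem_Icc, mem_ball2]
  constructor
  · rintro ⟨a, ⟨h1, h2⟩, q, hq, rfl⟩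
    have := abs_le.mpr ⟨h1, h2⟩
    simp only []
    linarith
  · intro h
    have h1 := abs_nonneg p.2.1
    have h2 := abs_nonneg p.2.2
    refine ⟨p.1, ⟨?_, ?_⟩, p.2, by linarith, rfl⟩
    · linarith [neg_abs_le p.1, le_abs_self p.1]
    · linarith [le_abs_self p.1]

private lemma mem_C4 {α β : ℤ} {p : ℤ × ℤ × ℤ × ℤ} :
    p ∈ C4 α β ↔ |p.1| + |p.2.1| + |p.2.2.1| + |p.2.2.2| ≤ α ∧
      |p.2.1| + |p.2.2.1| + |p.2.2.2| ≤ β := by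
  simp only [C4, Finset.mem_biUnion, Finset.mem_image, mem_ball1, mem_ball3]
  constructor
  · rintro ⟨y, hy, t, ht, rfl⟩
    simp only []
    constructor <;> linarith
  · rintro ⟨h1, h2⟩
    refine ⟨p.2, by linarith, p.1, by linarith, rfl⟩

private lemma cardC4 (α β : ℤ) (hβ : 0 ≤ β) (hαβ : β ≤ α) :
    3 * ((C4 α β).card : ℤ) =
      2 * (4 * β ^ 3 + 6 * β ^ 2 + 8 * β + 3) * α
        - 6 * β ^ 4 - 8 * β ^ 3 - 6 * β ^ 2 + 2 * β + 3 := by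
  have h0 : ((C4 α β).card : ℤ) = ∑ p ∈ C4 α β, (1 : ℤ) := by simp
  rw [h0, sum_C4]
  have h1 : ∀ y ∈ ball3 β,
      (∑ _t ∈ ball1 (α - |y.1| - |y.2.1| - |y.2.2|), (1 : ℤ))
        = (2 * α + 1) - 2 * (|y.1| + |y.2.1| + |y.2.2|) := by
    intro y hy
    rw [mem_ball3] at hy
    rw [Finset.sum_const, nsmul_eq_mul, mul_one, card_ball1 _ (by linarith)]
    ring
  rw [Finset.sum_congr rfl h1, Finset.sum_sub_distrib, Finset.sum_const, nsmul_eq_mul,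
    ← Finset.mul_sum]
  have hn3 := n3 β hβ
  have hw3 := w3 β hβ
  linear_combination (2 * α + 1) * hn3 - hw3

private lemma einj : Function.Injective
    (fun p : ℤ × ℤ × ℤ × ℤ => ![p.1, p.2.1, p.2.2.1, p.2.2.2]) := by
  intro p q h
  have h0 : p.1 = q.1 := congrFun h 0
  have h1 : p.2.1 = q.2.1 := congrFun h 1
  have h2 : p.2.2.1 = q.2.2.1 := congrFun h 2
  have h3 : p.2.2.2 = q.2.2.2 := congrFun h 3
  exact Prod.ext h0 (Prod.ext h1 (Prod.ext h2 h3))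

/-- For integers `α ≥ β ≥ 0`, the cardinality of
`C(4, α, β) = { x ∈ ℤ⁴ : |x₁| + |x₂| + |x₃| + |x₄| ≤ α and |x₂| + |x₃| + |x₄| ≤ β }` satisfies
`3·|C(4, α, β)| = 2(4β³ + 6β² + 8β + 3)α − 6β⁴ − 8β³ − 6β² + 2β + 3`. -/
theorem stmt19 (α β : ℤ) (hβ : 0 ≤ β) (hαβ : β ≤ α) :
    3 * (({x : Fin 4 → ℤ |
        |x 0| + |x 1| + |x 2| + |x 3| ≤ α ∧ |x 1| + |x 2| + |x 3| ≤ β}.ncard : ℤ)) =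
      2 * (4 * β ^ 3 + 6 * β ^ 2 + 8 * β + 3) * α
        - 6 * β ^ 4 - 8 * β ^ 3 - 6 * β ^ 2 + 2 * β + 3 := by
  have hset : {x : Fin 4 → ℤ |
        |x 0| + |x 1| + |x 2| + |x 3| ≤ α ∧ |x 1| + |x 2| + |x 3| ≤ β}
      = ↑((C4 α β).image (fun p => ![p.1, p.2.1, p.2.2.1, p.2.2.2])) := by
    ext x
    simp only [Set.mem_setOf_eq, Finset.coe_image, Set.mem_image, Finset.mem_coe, mem_C4]
    constructor
    · rintro ⟨h1, h2⟩
      refine ⟨(x 0, x 1, x 2, x 3), ⟨h1, h2⟩, ?_⟩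
      funext i
      fin_cases i <;> rfl
    · rintro ⟨p, ⟨h1, h2⟩, rfl⟩
      exact ⟨by simpa using h1, by simpa using h2⟩
  rw [hset, Set.ncard_coe_finset, Finset.card_image_of_injective _ einj]
  exact cardC4 α β hβ hαβ
end
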